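/- Suppose u : [0,T] × ℝ × [0,∞) → ℝ has ∂_y u continuous up to the boundary {y = 0}, and suppose that for y > 0 it holds ∂_t u = −(ℒ + ϱ)u + h, where moreover y∂²_y u(t,x,y) → 0 and y∂_x∂_y u(t,x,y) → 0 as (t,x,y) → (t₀,x₀,0), and ∂_x u, ∂_y u extend continuously to {y=0}. Then for all t ∈ [0,T), x ∈ ℝ, the equation ∂_t u(t,x,0) + (c∂_x + a∂_y + ϱ)u(t,x,0) = h(t,x,0) holds pointwise on the boundary. -/

import Mathlib

open Set Filter

lemma mvt_aux (w : ℝ → ℝ) (p q m : ℝ) (hpq : p ≤ q) (hm : 0 < m)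
    (hd : ∀ x ∈ Icc p q, m ≤ deriv w x) :
    m * (q - p) ≤ w q - w p := by
  have hdiff : ∀ x ∈ Icc p q, DifferentiableAt ℝ w x := by
    intro x hx
    refine differentiableAt_of_deriv_ne_zero ?_
    have := hd x hx; intro h0; rw [h0] at this; linarith
  set v : ℝ → ℝ := fun x => w x - m * x with hv
  have hvd : ∀ x ∈ Icc p q, DifferentiableAt ℝ v x := fun x hx =>
    ((hdiff x hx).sub ((differentiable_id.const_mul m) x))
  have hvderiv : ∀ x ∈ Icc p q, 0 ≤ deriv v x := by
    intro x hx
    have hdv : HasDerivAt v (deriv w x - m) x := by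
      have h := (hdiff x hx).hasDerivAt.sub ((hasDerivAt_id x).const_mul m)
      simp only [mul_one] at h; exact h
    rw [hdv.deriv]; linarith [hd x hx]
  have hmono : MonotoneOn v (Icc p q) := by
    apply monotoneOn_of_deriv_nonneg (convex_Icc p q)
    · exact fun x hx => (hvd x hx).continuousAt.continuousWithinAt
    · intro x hx
      rw [interior_Icc] at hx
      exact (hvd x (Ioo_subset_Icc_self hx)).differentiableWithinAt
    · intro x hx
      rw [interior_Icc] at hx
      exact hvderiv x (Ioo_subset_Icc_self hx)
  have := hmono (left_mem_Icc.2 hpq) (right_mem_Icc.2 hpq) hpq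
  simp only [hv] at this
  nlinarith

/-- The degenerate log-Heston operator applied to a function `v` of `(x,y)`. -/
noncomputable def Lop (a b c d lam sig ρ : ℝ) (v : ℝ → ℝ → ℝ) (x y : ℝ) : ℝ :=
  y / 2 * (lam ^ 2 * deriv (fun x' => deriv (fun x'' => v x'' y) x') x
      + 2 * ρ * lam * sig * deriv (fun x' => deriv (fun y' => v x' y') y) x
      + sig ^ 2 * deriv (fun y' => deriv (fun y'' => v x y'') y') y)
    + (c + d * y) * deriv (fun x' => v x' y) x
    + (a - b * y) * deriv (fun y' => v x y') y

set_option maxHeartbeats 1000000 in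
/-- if `u` solves `∂_t u = −(ℒ+ϱ)u + h` for `y > 0`, the quantities
`y∂²_y u` and `y∂_x∂_y u` vanish in the limit at boundary points, and `u, ∂_t u,
∂_x u, ∂_y u, h` extend continuously to `{y = 0}`, then the boundary equation
`∂_t u + (c∂_x + a∂_y + ϱ)u = h` holds pointwise at `y = 0` for all `t ∈ [0,T)`. -/
theorem stmt3 (T a lam sig b c d ρ ϱ : ℝ) (hT : 0 < T) (ha : 0 < a) (hlam : 0 < lam)
    (hsig : 0 < sig) (hρ : -1 < ρ ∧ ρ < 1)
    (u h : ℝ → ℝ → ℝ → ℝ)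
    (hu_cont : ContinuousOn (fun p : ℝ × ℝ × ℝ => u p.1 p.2.1 p.2.2)
      (Ico 0 T ×ˢ ((univ : Set ℝ) ×ˢ Ici 0)))
    (hut_cont : ContinuousOn (fun p : ℝ × ℝ × ℝ => deriv (fun s => u s p.2.1 p.2.2) p.1)
      (Ico 0 T ×ˢ ((univ : Set ℝ) ×ˢ Ici 0)))
    (hh_cont : ContinuousOn (fun p : ℝ × ℝ × ℝ => h p.1 p.2.1 p.2.2)
      (Ico 0 T ×ˢ ((univ : Set ℝ) ×ˢ Ici 0)))
    (hux_cont : ContinuousOn (fun p : ℝ × ℝ × ℝ => deriv (fun x' => u p.1 x' p.2.2) p.2.1)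
      (Ico 0 T ×ˢ ((univ : Set ℝ) ×ˢ Ici 0)))
    (huy_cont : ContinuousOn (fun p : ℝ × ℝ × ℝ => deriv (fun y' => u p.1 p.2.1 y') p.2.2)
      (Ico 0 T ×ˢ ((univ : Set ℝ) ×ˢ Ici 0)))
    (hpde : ∀ t ∈ Ico 0 T, ∀ x y : ℝ, 0 < y →
      deriv (fun s => u s x y) t
        = -(Lop a b c d lam sig ρ (fun x' y' => u t x' y') x y + ϱ * u t x y) + h t x y)
    (hlim_yy : ∀ t₀ ∈ Ico 0 T, ∀ x₀ : ℝ,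
      Tendsto (fun p : ℝ × ℝ × ℝ =>
          p.2.2 * deriv (fun y' => deriv (fun y'' => u p.1 p.2.1 y'') y') p.2.2)
        (nhdsWithin (t₀, x₀, 0) (Ico 0 T ×ˢ ((univ : Set ℝ) ×ˢ Ioi 0))) (nhds 0))
    (hlim_xy : ∀ t₀ ∈ Ico 0 T, ∀ x₀ : ℝ,
      Tendsto (fun p : ℝ × ℝ × ℝ =>
          p.2.2 * deriv (fun x' => deriv (fun y' => u p.1 x' y') p.2.2) p.2.1)
        (nhdsWithin (t₀, x₀, 0) (Ico 0 T ×ˢ ((univ : Set ℝ) ×ˢ Ioi 0))) (nhds 0)) :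
    ∀ t ∈ Ico 0 T, ∀ x : ℝ,
      deriv (fun s => u s x 0) t
        + (c * deriv (fun x' => u t x' 0) x + a * deriv (fun y' => u t x y') 0 + ϱ * u t x 0)
      = h t x 0 := by
  intro t ht x₀
  set S : Set (ℝ × ℝ × ℝ) := Ico 0 T ×ˢ ((univ : Set ℝ) ×ˢ Ici 0) with hSdef
  set Sp : Set (ℝ × ℝ × ℝ) := Ico 0 T ×ˢ ((univ : Set ℝ) ×ˢ Ioi 0) with hSpdef
  have hz₀S : ((t, x₀, 0) : ℝ × ℝ × ℝ) ∈ S := by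
    exact ⟨ht, mem_univ _, mem_Ici.2 (le_refl 0)⟩
  have hSpS : Sp ⊆ S :=
    Set.prod_mono subset_rfl (Set.prod_mono subset_rfl Ioi_subset_Ici_self)
  have hmono : nhdsWithin ((t, x₀, 0) : ℝ × ℝ × ℝ) Sp ≤ nhdsWithin (t, x₀, 0) S :=
    nhdsWithin_mono _ hSpS
  set g0 : ℝ := h t x₀ 0 - deriv (fun s => u s x₀ 0) t - ϱ * u t x₀ 0
      - c * deriv (fun x' => u t x' 0) x₀ - a * deriv (fun y' => u t x₀ y') 0 with hg0def
  suffices hg : g0 = 0 by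
    rw [hg0def] at hg; linarith
  by_contra hg0ne
  set L : ℝ := 2 / lam ^ 2 * g0 with hLdef
  have hlam2 : (lam : ℝ) ^ 2 ≠ 0 := by positivity
  have hLne : L ≠ 0 := by
    rw [hLdef]
    exact mul_ne_zero (by positivity) hg0ne
  -- Step A: the limit of y * ∂²ₓ u
  have hy0 : Tendsto (fun p : ℝ × ℝ × ℝ => p.2.2)
      (nhdsWithin ((t, x₀, 0) : ℝ × ℝ × ℝ) Sp) (nhds 0) :=
    ((continuous_snd.comp continuous_snd).tendsto ((t, x₀, 0) : ℝ × ℝ × ℝ)).mono_left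
      nhdsWithin_le_nhds
  have hhT : Tendsto (fun p : ℝ × ℝ × ℝ => h p.1 p.2.1 p.2.2)
      (nhdsWithin ((t, x₀, 0) : ℝ × ℝ × ℝ) Sp) (nhds (h t x₀ 0)) :=
    (hh_cont _ hz₀S).mono_left hmono
  have hDtT : Tendsto (fun p : ℝ × ℝ × ℝ => deriv (fun s => u s p.2.1 p.2.2) p.1)
      (nhdsWithin ((t, x₀, 0) : ℝ × ℝ × ℝ) Sp) (nhds (deriv (fun s => u s x₀ 0) t)) :=
    (hut_cont _ hz₀S).mono_left hmono
  have huT : Tendsto (fun p : ℝ × ℝ × ℝ => u p.1 p.2.1 p.2.2)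
      (nhdsWithin ((t, x₀, 0) : ℝ × ℝ × ℝ) Sp) (nhds (u t x₀ 0)) :=
    (hu_cont _ hz₀S).mono_left hmono
  have hUxT : Tendsto (fun p : ℝ × ℝ × ℝ => deriv (fun x' => u p.1 x' p.2.2) p.2.1)
      (nhdsWithin ((t, x₀, 0) : ℝ × ℝ × ℝ) Sp) (nhds (deriv (fun x' => u t x' 0) x₀)) :=
    (hux_cont _ hz₀S).mono_left hmono
  have hUyT : Tendsto (fun p : ℝ × ℝ × ℝ => deriv (fun y' => u p.1 p.2.1 y') p.2.2)
      (nhdsWithin ((t, x₀, 0) : ℝ × ℝ × ℝ) Sp) (nhds (deriv (fun y' => u t x₀ y') 0)) :=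
    (huy_cont _ hz₀S).mono_left hmono
  have big : Tendsto (fun p : ℝ × ℝ × ℝ =>
      h p.1 p.2.1 p.2.2 - deriv (fun s => u s p.2.1 p.2.2) p.1 - ϱ * u p.1 p.2.1 p.2.2
        - (c + d * p.2.2) * deriv (fun x' => u p.1 x' p.2.2) p.2.1
        - (a - b * p.2.2) * deriv (fun y' => u p.1 p.2.1 y') p.2.2
        - ρ * lam * sig *
            (p.2.2 * deriv (fun x' => deriv (fun y' => u p.1 x' y') p.2.2) p.2.1)
        - sig ^ 2 / 2 *
            (p.2.2 * deriv (fun y' => deriv (fun y'' => u p.1 p.2.1 y'') y') p.2.2))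
      (nhdsWithin ((t, x₀, 0) : ℝ × ℝ × ℝ) Sp)
      (nhds (h t x₀ 0 - deriv (fun s => u s x₀ 0) t - ϱ * u t x₀ 0
        - (c + d * 0) * deriv (fun x' => u t x' 0) x₀
        - (a - b * 0) * deriv (fun y' => u t x₀ y') 0
        - ρ * lam * sig * 0 - sig ^ 2 / 2 * 0)) := by
    exact ((((((hhT.sub hDtT).sub (huT.const_mul ϱ)).sub
      ((tendsto_const_nhds.add (hy0.const_mul d)).mul hUxT)).sub
      ((tendsto_const_nhds.sub (hy0.const_mul b)).mul hUyT)).sub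
      ((hlim_xy t ht x₀).const_mul (ρ * lam * sig))).sub
      ((hlim_yy t ht x₀).const_mul (sig ^ 2 / 2)))
  have big2 := big.const_mul (2 / lam ^ 2)
  have hval : 2 / lam ^ 2 * (h t x₀ 0 - deriv (fun s => u s x₀ 0) t - ϱ * u t x₀ 0
        - (c + d * 0) * deriv (fun x' => u t x' 0) x₀
        - (a - b * 0) * deriv (fun y' => u t x₀ y') 0
        - ρ * lam * sig * 0 - sig ^ 2 / 2 * 0) = L := by
    rw [hLdef, hg0def]; ring
  rw [hval] at big2
  have hF : Tendsto (fun p : ℝ × ℝ × ℝ =>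
      p.2.2 * deriv (fun x' => deriv (fun x'' => u p.1 x'' p.2.2) x') p.2.1)
      (nhdsWithin ((t, x₀, 0) : ℝ × ℝ × ℝ) Sp) (nhds L) := by
    refine big2.congr' ?_
    filter_upwards [self_mem_nhdsWithin] with p hp
    have hp1 : p.1 ∈ Ico 0 T := hp.1
    have hp3 : (0 : ℝ) < p.2.2 := hp.2.2
    have hpde' := hpde p.1 hp1 p.2.1 p.2.2 hp3
    simp only [Lop] at hpde'
    rw [div_mul_eq_mul_div, div_eq_iff hlam2]
    linear_combination (-2 : ℝ) * hpde'
  -- Step B: contradiction via MVT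
  have habsL : 0 < |L| := abs_pos.2 hLne
  obtain ⟨δ₂, hδ₂pos, hδ₂⟩ := Metric.tendsto_nhdsWithin_nhds.mp hF (|L| / 2) (by positivity)
  obtain ⟨δ₁, hδ₁pos, hδ₁⟩ :=
    Metric.continuousWithinAt_iff.mp (hux_cont _ hz₀S) 1 one_pos
  set M : ℝ := |deriv (fun x' => u t x' 0) x₀| + 1 with hMdef
  have hMpos : 0 < M := by positivity
  set δ : ℝ := min δ₁ δ₂ with hδdef
  have hδpos : 0 < δ := lt_min hδ₁pos hδ₂pos
  set r : ℝ := δ / 2 with hrdef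
  have hrpos : 0 < r := by positivity
  set y0 : ℝ := min (δ / 2) (|L| * r / (4 * M)) with hy0def
  have hy0pos : 0 < y0 := lt_min (by positivity) (by positivity)
  have hy0δ : y0 < δ := lt_of_le_of_lt (min_le_left _ _) (by linarith)
  have hy0le : y0 ≤ |L| * r / (4 * M) := min_le_right _ _
  -- points in the strip
  have hmem : ∀ x ∈ Icc (x₀ - r) (x₀ + r),
      ((t, x, y0) : ℝ × ℝ × ℝ) ∈ Sp ∧ dist ((t, x, y0) : ℝ × ℝ × ℝ) (t, x₀, 0) < δ := by
    intro x hx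
    constructor
    · exact ⟨ht, mem_univ _, hy0pos⟩
    · have h1 : |x - x₀| ≤ r := by
        rw [abs_le]; constructor <;> [linarith [hx.1]; linarith [hx.2]]
      have : dist ((t, x, y0) : ℝ × ℝ × ℝ) (t, x₀, 0)
          = max (dist t t) (max (dist x x₀) (dist y0 0)) := by
        simp [Prod.dist_eq]
      rw [this]
      apply max_lt (by simpa using hδpos)
      apply max_lt
      · rw [Real.dist_eq]; linarith
      · rw [Real.dist_eq, sub_zero, abs_of_pos hy0pos]; exact hy0δ
  -- bound on ∂ₓ u along the strip
  have hbound : ∀ x ∈ Icc (x₀ - r) (x₀ + r),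
      |deriv (fun x' => u t x' y0) x| ≤ M := by
    intro x hx
    obtain ⟨hmem1, hmem2⟩ := hmem x hx
    have hdist : dist ((t, x, y0) : ℝ × ℝ × ℝ) (t, x₀, 0) < δ₁ :=
      lt_of_lt_of_le hmem2 (min_le_left _ _)
    have hδ₁' : dist (deriv (fun x' => u t x' y0) x)
        (deriv (fun x' => u t x' 0) x₀) < 1 := by
      simpa using hδ₁ (hSpS hmem1) hdist
    rw [Real.dist_eq] at hδ₁'
    rw [hMdef]
    have h2 := abs_sub_abs_le_abs_sub (deriv (fun x' => u t x' y0) x)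
      (deriv (fun x' => u t x' 0) x₀)
    linarith
  -- deriv lower bound from tendsto
  have hder : ∀ x ∈ Icc (x₀ - r) (x₀ + r),
      |y0 * deriv (fun x' => deriv (fun x'' => u t x'' y0) x') x - L| < |L| / 2 := by
    intro x hx
    obtain ⟨hmem1, hmem2⟩ := hmem x hx
    have hdist : dist ((t, x, y0) : ℝ × ℝ × ℝ) (t, x₀, 0) < δ₂ :=
      lt_of_lt_of_le hmem2 (min_le_right _ _)
    have hδ₂' : dist (y0 * deriv
        (fun x' => deriv (fun x'' => u t x'' y0) x') x) L < |L| / 2 := by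
      simpa using hδ₂ hmem1 hdist
    rw [Real.dist_eq] at hδ₂'
    exact hδ₂'
  have hkey : |L| * r / y0 ≥ 4 * M := by
    rw [ge_iff_le, le_div_iff₀ hy0pos]
    calc 4 * M * y0 ≤ 4 * M * (|L| * r / (4 * M)) := by
          apply mul_le_mul_of_nonneg_left hy0le (by positivity)
      _ = |L| * r := by field_simp
  have hfinal : (2 : ℝ) * M < 2 * M := by
    rcases lt_or_gt_of_ne hLne with hLneg | hLpos
    · -- L < 0 : use -∂ₓu
      have habs : |L| = -L := abs_of_neg hLneg
      have hd : ∀ x ∈ Icc (x₀ - r) (x₀ + r),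
          |L| / (2 * y0) ≤ deriv (fun x' => -(deriv (fun x'' => u t x'' y0) x')) x := by
        intro x hx
        have h1 := hder x hx
        rw [abs_lt] at h1
        have h2 : deriv (fun x' => -(deriv (fun x'' => u t x'' y0) x')) x
            = -deriv (fun x' => deriv (fun x'' => u t x'' y0) x') x := deriv.fun_neg
        rw [h2]
        rw [div_le_iff₀ (by positivity)]
        nlinarith [h1.2, habs]
      have hmvt : |L| / (2 * y0) * ((x₀ + r) - (x₀ - r))
          ≤ -(deriv (fun x'' => u t x'' y0) (x₀ + r))
            - -(deriv (fun x'' => u t x'' y0) (x₀ - r)) :=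
        mvt_aux _ (x₀ - r) (x₀ + r) (|L| / (2 * y0)) (by linarith) (by positivity) hd
      have hb1 := hbound (x₀ - r) (left_mem_Icc.2 (by linarith))
      have hb2 := hbound (x₀ + r) (right_mem_Icc.2 (by linarith))
      rw [abs_le] at hb1 hb2
      have harith : |L| / (2 * y0) * ((x₀ + r) - (x₀ - r)) = |L| * r / y0 := by
        have h2r : (x₀ + r) - (x₀ - r) = 2 * r := by ring
        rw [h2r]
        field_simp
      rw [harith] at hmvt
      nlinarith [hb1.1, hb2.2, hkey]
    · -- L > 0
      have habs : |L| = L := abs_of_pos hLpos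
      have hd : ∀ x ∈ Icc (x₀ - r) (x₀ + r),
          |L| / (2 * y0) ≤ deriv (fun x' => deriv (fun x'' => u t x'' y0) x') x := by
        intro x hx
        have h1 := hder x hx
        rw [abs_lt] at h1
        rw [div_le_iff₀ (by positivity)]
        nlinarith [h1.1, habs]
      have hmvt : |L| / (2 * y0) * ((x₀ + r) - (x₀ - r))
          ≤ deriv (fun x'' => u t x'' y0) (x₀ + r)
            - deriv (fun x'' => u t x'' y0) (x₀ - r) :=
        mvt_aux _ (x₀ - r) (x₀ + r) (|L| / (2 * y0)) (by linarith) (by positivity) hd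
      have hb1 := hbound (x₀ - r) (left_mem_Icc.2 (by linarith))
      have hb2 := hbound (x₀ + r) (right_mem_Icc.2 (by linarith))
      rw [abs_le] at hb1 hb2
      have harith : |L| / (2 * y0) * ((x₀ + r) - (x₀ - r)) = |L| * r / y0 := by
        have h2r : (x₀ + r) - (x₀ - r) = 2 * r := by ring
        rw [h2r]
        field_simp
      rw [harith] at hmvt
      nlinarith [hb1.2, hb2.1, hkey]
  linarith
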